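/- Let X be a finite set and let i, r : X → X be involutions. If an ir class C has at least two elements, then no element of C is fixed by both i and r, and the number of elements z ∈ C satisfying i(z) = z or r(z) = z is either 0 or exactly 2. -/

import Mathlib

/-- The relation generated by introduction/removal partners: `a` is related to `b`
if `b` is the `i`-partner or the `r`-partner of `a`. -/
def irRel {X : Type*} (i r : X → X) : X → X → Prop :=
  fun a b => i a = b ∨ r a = b

/-- The ir class of `x`: the equivalence class of `x` under the equivalence relation
generated by `x ∼ i x` and `x ∼ r x`. -/
def irClass {X : Type*} (i r : X → X) (x : X) : Set X :=
  {y | Relation.EqvGen (irRel i r) x y}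

namespace IRAux

variable {X : Type*} (i r : X → X)

lemma mem_self (x : X) : x ∈ irClass i r x := Relation.EqvGen.refl x

lemma class_eq_of_mem {x z : X} (h : z ∈ irClass i r x) :
    irClass i r x = irClass i r z := by
  ext y
  constructor
  · intro hy; exact Relation.EqvGen.trans _ _ _ (Relation.EqvGen.symm _ _ h) hy
  · intro hy; exact Relation.EqvGen.trans _ _ _ h hy

lemma class_swap (x : X) : irClass i r x = irClass r i x := by
  ext y
  constructor <;> intro h <;>
    exact Relation.EqvGen.mono (fun a b hab => Or.symm hab) _ _ h

lemma class_of_bifixed (hi : Function.Involutive i) (hr : Function.Involutive r)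
    {x : X} (hix : i x = x) (hrx : r x = x) :
    irClass i r x = {x} := by
  have key : ∀ a b, Relation.EqvGen (irRel i r) a b → (a = x ↔ b = x) := by
    intro a b h
    induction h with
    | rel a b hab =>
      constructor
      · rintro rfl
        rcases hab with h | h
        · rw [← h, hix]
        · rw [← h, hrx]
      · intro hb
        rcases hab with h | h
        · rw [← hi a, h, hb, hix]
        · rw [← hr a, h, hb, hrx]
    | refl a => exact Iff.rfl
    | symm a b h ih => exact ih.symm
    | trans a b c h1 h2 ih1 ih2 => exact ih1.trans ih2
  apply Set.eq_singleton_iff_unique_mem.mpr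
  exact ⟨mem_self i r x, fun y hy => ((key x y hy).mp rfl)⟩

lemma key {X : Type*} [Fintype X] (i r : X → X) (hi : Function.Involutive i)
    (hr : Function.Involutive r) (a : X) (ha : i a = a)
    (h2 : 2 ≤ (irClass i r a).ncard) :
    ∃ b, b ≠ a ∧ {z ∈ irClass i r a | i z = z ∨ r z = z} = {a, b} := by
  classical
  set I : Equiv.Perm X := hi.toPerm i with hI
  set R : Equiv.Perm X := hr.toPerm r with hR
  set σ : Equiv.Perm X := I * R with hσdef
  have hIap : ∀ z, I z = i z := fun z => rfl
  have hRap : ∀ z, R z = r z := fun z => rfl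
  have hσap : ∀ z, σ z = i (r z) := fun z => rfl
  have hII : I * I = 1 := by
    ext z; simp [Equiv.Perm.mul_apply, hIap, hi z]
  have hRR : R * R = 1 := by
    ext z; simp [Equiv.Perm.mul_apply, hRap, hr z]
  have hIinv : I⁻¹ = I := by
    rw [inv_eq_iff_mul_eq_one, hII]
  have hRinv : R⁻¹ = R := by
    rw [inv_eq_iff_mul_eq_one, hRR]
  have hσinv : σ⁻¹ = R * I := by
    rw [hσdef, mul_inv_rev, hIinv, hRinv]
  have hσinvap : ∀ z, σ⁻¹ z = r (i z) := by
    intro z; rw [hσinv, Equiv.Perm.mul_apply, hRap, hIap]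
  have h1 : I * σ * I⁻¹ = σ⁻¹ := by
    rw [hIinv, hσdef, hσinv, show I * (I * R) * I = (I * I) * (R * I) by
      simp [mul_assoc], hII, one_mul]
  have h1R : R * σ * R⁻¹ = σ⁻¹ := by
    rw [hRinv, hσdef, hσinv]
    calc R * (I * R) * R = (R * I) * (R * R) := by simp [mul_assoc]
    _ = R * I := by rw [hRR, mul_one]
  have hconjI : ∀ k : ℤ, I * σ ^ k * I = σ ^ (-k) := by
    intro k
    have h := map_zpow (MulAut.conj I) σ k
    simp only [MulAut.conj_apply] at h
    rw [h1] at h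
    calc I * σ ^ k * I = I * σ ^ k * I⁻¹ := by rw [hIinv]
      _ = σ⁻¹ ^ k := h
      _ = σ ^ (-k) := by rw [inv_zpow, zpow_neg]
  have hconjR : ∀ k : ℤ, R * σ ^ k * R = σ ^ (-k) := by
    intro k
    have h := map_zpow (MulAut.conj R) σ k
    simp only [MulAut.conj_apply] at h
    rw [h1R] at h
    calc R * σ ^ k * R = R * σ ^ k * R⁻¹ := by rw [hRinv]
      _ = σ⁻¹ ^ k := h
      _ = σ ^ (-k) := by rw [inv_zpow, zpow_neg]
  have hIz : ∀ (k : ℤ) (z : X), i ((σ ^ k) z) = (σ ^ (-k)) (i z) := by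
    intro k z
    have h := congrArg (fun e : Equiv.Perm X => e (i z)) (hconjI k)
    simp only [Equiv.Perm.mul_apply] at h
    rw [hIap, hIap, hi z] at h
    exact h
  have hRz : ∀ (k : ℤ) (z : X), r ((σ ^ k) z) = (σ ^ (-k)) (r z) := by
    intro k z
    have h := congrArg (fun e : Equiv.Perm X => e (r z)) (hconjR k)
    simp only [Equiv.Perm.mul_apply] at h
    rw [hRap, hRap, hr z] at h
    exact h
  have hra : r a = σ⁻¹ a := by
    rw [hσinvap, ha]
  have happ : ∀ k l : ℤ, (σ ^ k) ((σ ^ l) a) = (σ ^ (k + l)) a := by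
    intro k l; rw [zpow_add, Equiv.Perm.mul_apply]
  -- the class is the σ-orbit of a
  have horb : irClass i r a = {z | ∃ k : ℤ, (σ ^ k) a = z} := by
    ext y
    constructor
    · intro hy
      have main : ∀ u v, Relation.EqvGen (irRel i r) u v →
          ((∃ k : ℤ, (σ ^ k) a = u) ↔ (∃ k : ℤ, (σ ^ k) a = v)) := by
        intro u v h
        induction h with
        | rel u v huv =>
          constructor
          · rintro ⟨k, rfl⟩
            rcases huv with h | h
            · exact ⟨-k, by rw [← h, hIz k a, ha]⟩
            · refine ⟨-k + -1, ?_⟩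
              rw [← h, hRz k a, hra, ← zpow_neg_one, happ]
          · rintro ⟨k, rfl⟩
            rcases huv with h | h
            · have hu : u = i ((σ ^ k) a) := by rw [← h, hi u]
              exact ⟨-k, by rw [hu, hIz k a, ha]⟩
            · have hu : u = r ((σ ^ k) a) := by rw [← h, hr u]
              refine ⟨-k + -1, ?_⟩
              rw [hu, hRz k a, hra, ← zpow_neg_one, happ]
        | refl u => exact Iff.rfl
        | symm u v h ih => exact ih.symm
        | trans u v w h1 h2 ih1 ih2 => exact ih1.trans ih2
      exact (main a y hy).mp ⟨0, rfl⟩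
    · rintro ⟨k, rfl⟩
      induction k using Int.induction_on with
      | zero => simpa using mem_self i r a
      | succ k ih =>
        have hstep : (σ ^ ((k : ℤ) + 1)) a = i (r ((σ ^ (k : ℤ)) a)) := by
          rw [show (k : ℤ) + 1 = 1 + k by ring, zpow_one_add, Equiv.Perm.mul_apply, hσap]
        rw [hstep]
        exact Relation.EqvGen.trans _ _ _
          (Relation.EqvGen.trans _ _ _ ih
            (Relation.EqvGen.rel _ _ (Or.inr rfl)))
          (Relation.EqvGen.rel _ _ (Or.inl rfl))
      | pred k ih =>
        have hstep : (σ ^ (-(k : ℤ) - 1)) a = r (i ((σ ^ (-(k : ℤ))) a)) := by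
          rw [show -(k : ℤ) - 1 = -1 + -k by ring, zpow_add, Equiv.Perm.mul_apply,
            zpow_neg_one, hσinvap]
        rw [hstep]
        exact Relation.EqvGen.trans _ _ _
          (Relation.EqvGen.trans _ _ _ ih
            (Relation.EqvGen.rel _ _ (Or.inl rfl)))
          (Relation.EqvGen.rel _ _ (Or.inr rfl))
  -- period
  set m := Function.minimalPeriod (⇑σ) a with hm
  have hper : Function.IsPeriodicPt (⇑σ) (orderOf σ) a := by
    show (⇑σ)^[orderOf σ] a = a
    rw [Equiv.Perm.iterate_eq_pow, pow_orderOf_eq_one]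
    rfl
  have hmpos : 0 < m := hper.minimalPeriod_pos (orderOf_pos σ)
  have hmfix : (σ ^ (m : ℤ)) a = a := by
    rw [zpow_natCast]
    have := Function.iterate_minimalPeriod (f := ⇑σ) (x := a)
    rwa [Equiv.Perm.iterate_eq_pow] at this
  have hmul : ∀ q : ℤ, (σ ^ ((m : ℤ) * q)) a = a := by
    intro q
    rw [zpow_mul]
    exact Equiv.Perm.zpow_apply_eq_self_of_apply_eq_self hmfix q
  have hdvd : ∀ k : ℤ, (σ ^ k) a = a ↔ (m : ℤ) ∣ k := by
    intro k
    constructor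
    · intro hk
      have hsplit : (σ ^ k) a = (σ ^ (k % (m : ℤ))) a := by
        conv_lhs => rw [show k = k % (m : ℤ) + (m : ℤ) * (k / (m : ℤ)) from
          (Int.emod_add_mul_ediv k (m : ℤ)).symm]
        rw [zpow_add, Equiv.Perm.mul_apply, hmul]
      rw [hsplit] at hk
      have hnn : 0 ≤ k % (m : ℤ) := Int.emod_nonneg k (by exact_mod_cast hmpos.ne')
      have hlt : k % (m : ℤ) < (m : ℤ) := Int.emod_lt_of_pos k (by exact_mod_cast hmpos)
      set s := (k % (m : ℤ)).toNat with hs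
      have hks : k % (m : ℤ) = (s : ℤ) := (Int.toNat_of_nonneg hnn).symm
      rw [hks, zpow_natCast] at hk
      have hper' : Function.IsPeriodicPt (⇑σ) s a := by
        show (⇑σ)^[s] a = a
        rw [Equiv.Perm.iterate_eq_pow]; exact hk
      have hdvd' : m ∣ s := hper'.minimalPeriod_dvd
      have hslt : s < m := by
        have h' : (s : ℤ) < (m : ℤ) := hks ▸ hlt
        exact_mod_cast h'
      have hs0 : s = 0 := Nat.eq_zero_of_dvd_of_lt hdvd' hslt
      apply Int.dvd_of_emod_eq_zero
      rw [hks, hs0]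
      rfl
    · intro hdk
      obtain ⟨q, rfl⟩ := hdk
      exact hmul q
  have heq : ∀ k l : ℤ, (m : ℤ) ∣ (k - l) → (σ ^ k) a = (σ ^ l) a := by
    intro k l hkl
    have h0 : (σ ^ (k - l)) a = a := (hdvd _).mpr hkl
    calc (σ ^ k) a = (σ ^ (l + (k - l))) a := by rw [show l + (k - l) = k by ring]
      _ = (σ ^ l) ((σ ^ (k - l)) a) := (happ l (k - l)).symm
      _ = (σ ^ l) a := by rw [h0]
  have hper2 : ∀ k l : ℤ, (σ ^ k) a = (σ ^ l) a → (m : ℤ) ∣ (k - l) := by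
    intro k l hkl
    have : (σ ^ (k - l)) a = a := by
      have := congrArg (fun z => (σ ^ (-l)) z) hkl
      rw [happ, happ, show -l + k = k - l by ring, show -l + l = 0 by ring,
        zpow_zero] at this
      simpa using this
    exact (hdvd _).mp this
  have hodd_cancel : Odd m → ∀ x : ℤ, (m : ℤ) ∣ 2 * x → (m : ℤ) ∣ x := by
    intro ho x hx
    have hcop : IsCoprime (m : ℤ) 2 := by
      rw [Int.isCoprime_iff_gcd_eq_one]
      have : Nat.Coprime m 2 := Nat.coprime_two_right.mpr ho
      simpa [Int.gcd] using this
    exact hcop.dvd_of_dvd_mul_left hx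
  -- m is at least 2
  have hm2 : 2 ≤ m := by
    rcases Nat.lt_or_ge m 2 with hlt | hge
    · exfalso
      have hm1 : m = 1 := by omega
      have hσa : σ a = a := by
        have hfix1 := hmfix
        rw [hm1] at hfix1
        simpa using hfix1
      have hraa : r a = a := by
        have hia : i (r a) = a := hσa
        calc r a = i (i (r a)) := (hi (r a)).symm
          _ = i a := by rw [hia]
          _ = a := ha
      rw [class_of_bifixed i r hi hr ha hraa] at h2
      simp [Set.ncard_singleton] at h2
    · exact hge
  set h : ℕ := m / 2 with hh
  set b : X := (σ ^ (h : ℤ)) a with hb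
  have hbne : b ≠ a := by
    intro hba
    have hd : (m : ℤ) ∣ ((h : ℤ) - 0) := hper2 _ _ (by rw [zpow_zero, Equiv.Perm.one_apply]; exact hba)
    rw [sub_zero] at hd
    have h1' : m ∣ h := Int.natCast_dvd_natCast.mp hd
    have h2' : 0 < h := Nat.div_pos hm2 (by norm_num)
    have h3' : h < m := Nat.div_lt_self hmpos (by norm_num)
    exact absurd (Nat.le_of_dvd h2' h1') (not_le.mpr h3')
  refine ⟨b, hbne, ?_⟩
  have hib : i b = (σ ^ (-(h : ℤ))) a := by rw [hb, hIz, ha]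
  have hrb : r b = (σ ^ (-(h : ℤ) + -1)) a := by
    rw [hb, hRz, hra, ← zpow_neg_one, happ]
  have hbfix : i b = b ∨ r b = b := by
    rcases Nat.even_or_odd m with he | ho
    · left
      have hmh : m = 2 * h := by
        have := Nat.even_iff.mp he
        omega
      rw [hib, hb]
      apply heq
      refine ⟨-1, ?_⟩
      push_cast [hmh]
      ring
    · right
      have hmh : m = 2 * h + 1 := by
        have := Nat.odd_iff.mp ho
        omega
      rw [hrb, hb]
      apply heq
      refine ⟨-1, ?_⟩
      push_cast [hmh]
      ring
  -- the set equality
  ext z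
  simp only [Set.mem_setOf_eq, Set.mem_insert_iff, Set.mem_singleton_iff]
  constructor
  · rintro ⟨hzC, hfix⟩
    rw [horb] at hzC
    obtain ⟨k, rfl⟩ := hzC
    rcases hfix with hf | hf
    · -- i-fixed
      have hif : (σ ^ (-k)) a = (σ ^ k) a := by
        rw [← hf, hIz, ha]
      have hd : (m : ℤ) ∣ (-k - k) := hper2 _ _ hif
      have hd2 : (m : ℤ) ∣ 2 * k := by
        have : (m : ℤ) ∣ -(2 * k) := by
          convert hd using 1; ring
        exact (dvd_neg.mp this)
      rcases Nat.even_or_odd m with he | ho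
      · have hmh : m = 2 * h := by
          have := Nat.even_iff.mp he
          omega
        have hhk : (h : ℤ) ∣ k := by
          rcases hd2 with ⟨t, ht⟩
          refine ⟨t, ?_⟩
          have hteq : (2 : ℤ) * k = 2 * ((h : ℤ) * t) := by
            rw [ht]; push_cast [hmh]; ring
          linarith
        rcases hhk with ⟨t, rfl⟩
        rcases Int.even_or_odd t with ⟨u, rfl⟩ | ⟨u, rfl⟩
        · left
          rw [show (σ ^ ((h : ℤ) * (u + u))) a = (σ ^ (0 : ℤ)) a from
            heq _ _ ⟨u, by push_cast [hmh]; ring⟩]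
          simp
        · right
          rw [hb]
          exact heq _ _ ⟨u, by push_cast [hmh]; ring⟩
      · -- m odd, i-fixed
        left
        have hk : (m : ℤ) ∣ k := hodd_cancel ho k hd2
        rw [show (σ ^ k) a = (σ ^ (0 : ℤ)) a from heq _ _ (by simpa using hk)]
        simp
    · -- r-fixed
      have hrf : (σ ^ (-k + -1)) a = (σ ^ k) a := by
        rw [← hf, hRz, hra, ← zpow_neg_one, happ]
      have hd : (m : ℤ) ∣ (-k + -1 - k) := hper2 _ _ hrf
      have hd2 : (m : ℤ) ∣ 2 * k + 1 := by
        have : (m : ℤ) ∣ -(2 * k + 1) := by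
          convert hd using 1; ring
        exact (dvd_neg.mp this)
      have ho : Odd m := by
        rcases Nat.even_or_odd m with he | ho
        · exfalso
          have h2m : (2 : ℤ) ∣ (m : ℤ) := by
            rcases Nat.even_iff.mp he with _
            exact_mod_cast (even_iff_two_dvd.mp he)
          have : (2 : ℤ) ∣ 2 * k + 1 := h2m.trans hd2
          omega
        · exact ho
      have hmh : m = 2 * h + 1 := by
        have := Nat.odd_iff.mp ho
        omega
      right
      rw [hb]
      apply heq
      apply hodd_cancel ho
      have : 2 * (k - (h : ℤ)) = (2 * k + 1) - (m : ℤ) := by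
        push_cast [hmh]; ring
      rw [this]
      exact dvd_sub hd2 dvd_rfl
  · rintro (hz | hz)
    · rw [hz]; exact ⟨mem_self i r a, Or.inl ha⟩
    · rw [hz]
      refine ⟨?_, hbfix⟩
      rw [horb]
      exact ⟨h, rfl⟩

end IRAux

/-- If an ir class `C` has at least two elements, then no element of `C` is fixed by
both `i` and `r`, and the number of elements `z ∈ C` with `i z = z` or `r z = z`
is either `0` or exactly `2`. -/
theorem ir_class_fixed_count {X : Type*} [Fintype X] (i r : X → X)
    (hi : Function.Involutive i) (hr : Function.Involutive r)
    (C : Set X) (hC : ∃ x, C = irClass i r x) (h2 : 2 ≤ C.ncard) :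
    (∀ z ∈ C, ¬(i z = z ∧ r z = z)) ∧
    (({z ∈ C | i z = z ∨ r z = z}).ncard = 0 ∨
      ({z ∈ C | i z = z ∨ r z = z}).ncard = 2) := by
  classical
  obtain ⟨x, rfl⟩ := hC
  constructor
  · rintro z hz ⟨hiz, hrz⟩
    have hcz : irClass i r x = irClass i r z := IRAux.class_eq_of_mem i r hz
    rw [hcz, IRAux.class_of_bifixed i r hi hr hiz hrz] at h2
    simp [Set.ncard_singleton] at h2
  · by_cases hS : {z ∈ irClass i r x | i z = z ∨ r z = z} = ∅
    · left
      rw [hS]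
      exact Set.ncard_empty X
    · right
      obtain ⟨a, haC, hfix⟩ := Set.nonempty_iff_ne_empty.mpr hS
      have hclass : irClass i r x = irClass i r a := IRAux.class_eq_of_mem i r haC
      rw [hclass] at h2 ⊢
      rcases hfix with hia | hra
      · obtain ⟨b, hbne, hset⟩ := IRAux.key i r hi hr a hia h2
        rw [hset]
        exact Set.ncard_pair (Ne.symm hbne)
      · have h2' : 2 ≤ (irClass r i a).ncard := by
          rw [← IRAux.class_swap]; exact h2
        obtain ⟨b, hbne, hset⟩ := IRAux.key r i hr hi a hra h2'
        have hswap : {z ∈ irClass i r a | i z = z ∨ r z = z}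
            = {z ∈ irClass r i a | r z = z ∨ i z = z} := by
          rw [IRAux.class_swap i r a]
          ext z
          simp only [Set.mem_setOf_eq]
          tauto
        rw [hswap, hset]
        exact Set.ncard_pair (Ne.symm hbne)
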